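/- Let $A \in \mathbb{C}^{n \times n}$, $B \in \mathbb{C}^{n \times m}$, $C \in \mathbb{C}^{q \times n}$, $D \in \mathbb{C}^{q \times m}$, $G \in \mathbb{C}^{p \times p}$, $H \in \mathbb{C}^{p \times q}$. Suppose: (i) for every $\eta \in \mathbb{C}$ with $\operatorname{Re}(\eta) \ge 0$, $\operatorname{rank}[A - \eta I_n \;\; B] = n$; (ii) for every $\eta \in \mathbb{C}$, $\operatorname{rank}[H \;\; G - \eta I_p] = p$; (iii) for every eigenvalue $\eta$ of $G$, $\operatorname{rank}\begin{bmatrix} A - \eta I_n & B \\ C & D \end{bmatrix} = n + q$. Then for every $\eta \in \mathbb{C}$ with $\operatorname{Re}(\eta) \ge 0$, $\operatorname{rank}\begin{bmatrix} A - \eta I_n & 0 & B \\ HC & G - \eta I_p & HD \end{bmatrix} = n + p$. -/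

import Mathlib

open Matrix

lemma rank_eq_card_rows_iff {ι κ : Type*} [Fintype ι] [Fintype κ] [DecidableEq ι]
    (M : Matrix ι κ ℂ) :
    M.rank = Fintype.card ι ↔ ∀ x : ι → ℂ, x ᵥ* M = 0 → x = 0 := by
  rw [← Matrix.rank_transpose]
  unfold Matrix.rank
  have hrn := LinearMap.finrank_range_add_finrank_ker Mᵀ.mulVecLin
  rw [Module.finrank_fintype_fun_eq_card] at hrn
  constructor
  · intro h x hx
    have hker : Module.finrank ℂ (LinearMap.ker Mᵀ.mulVecLin) = 0 := by omega
    rw [Submodule.finrank_eq_zero] at hker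
    have : x ∈ LinearMap.ker Mᵀ.mulVecLin := by
      simp [LinearMap.mem_ker, Matrix.mulVecLin_apply, Matrix.mulVec_transpose, hx]
    rw [hker] at this
    simpa using this
  · intro h
    have hker : LinearMap.ker Mᵀ.mulVecLin = ⊥ := by
      ext x
      simp only [LinearMap.mem_ker, Submodule.mem_bot, Matrix.mulVecLin_apply,
        Matrix.mulVec_transpose]
      exact ⟨fun hx => h x hx, fun hx => by simp [hx]⟩
    rw [hker, finrank_bot] at hrn
    omega

open Matrix in
theorem stmt_4 (n m q p : ℕ)
    (A : Matrix (Fin n) (Fin n) ℂ) (B : Matrix (Fin n) (Fin m) ℂ)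
    (C : Matrix (Fin q) (Fin n) ℂ) (D : Matrix (Fin q) (Fin m) ℂ)
    (G : Matrix (Fin p) (Fin p) ℂ) (H : Matrix (Fin p) (Fin q) ℂ)
    (h1 : ∀ η : ℂ, 0 ≤ η.re → (fromCols (A - η • 1) B).rank = n)
    (h2 : ∀ η : ℂ, (fromCols H (G - η • 1)).rank = p)
    (h3 : ∀ η ∈ spectrum ℂ G, (fromBlocks (A - η • 1) B C D).rank = n + q) :
    ∀ η : ℂ, 0 ≤ η.re →
      (fromCols (fromBlocks (A - η • 1) 0 (H * C) (G - η • 1))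
        (fromRows B (H * D))).rank = n + p := by
  intro η hη
  have hcard : (n + p) = Fintype.card (Fin n ⊕ Fin p) := by simp
  rw [hcard, rank_eq_card_rows_iff]
  intro z hz
  set x : Fin n → ℂ := z ∘ Sum.inl with hxdef
  set y : Fin p → ℂ := z ∘ Sum.inr with hydef
  have hz' : z = Sum.elim x y := by ext (i | i) <;> rfl
  rw [hz', vecMul_fromCols] at hz
  have hblk := congrArg (· ∘ Sum.inl) hz
  have hrow := congrArg (· ∘ Sum.inr) hz
  simp only [Sum.elim_comp_inl, Sum.elim_comp_inr] at hblk hrow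
  rw [vecMul_fromBlocks] at hblk
  simp only [Sum.elim_comp_inl, Sum.elim_comp_inr] at hblk
  -- hblk : Sum.elim (x ᵥ* (A - η•1) + y ᵥ* (H*C)) (x ᵥ* 0 + y ᵥ* (G - η•1)) = 0
  have hb1 : x ᵥ* (A - η • 1) + y ᵥ* (H * C) = 0 := by
    have := congrArg (· ∘ Sum.inl) hblk
    simpa using this
  have hb2 : y ᵥ* (G - η • 1) = 0 := by
    have := congrArg (· ∘ Sum.inr) hblk
    simpa using this
  have hr : x ᵥ* B + y ᵥ* (H * D) = 0 := by
    have : (Sum.elim x y) ᵥ* fromRows B (H * D) = 0 := hrow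
    rwa [sumElim_vecMul_fromRows] at this
  by_cases hspec : η ∈ spectrum ℂ G
  · -- y(G-ηI) = 0; (x, yH) kills [A-ηI B; C D]
    have h3' := (rank_eq_card_rows_iff _).mp (by
      rw [h3 η hspec]; simp)
    have hkill : (Sum.elim x (y ᵥ* H)) ᵥ* fromBlocks (A - η • 1) B C D = 0 := by
      rw [vecMul_fromBlocks]
      ext (i | i)
      · simpa [vecMul_vecMul] using congrFun hb1 i
      · simpa [vecMul_vecMul] using congrFun hr i
    have := h3' _ hkill
    have hx0 : x = 0 := by ext i; exact congrFun this (Sum.inl i)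
    have hyH : y ᵥ* H = 0 := by ext i; exact congrFun this (Sum.inr i)
    have h2' := (rank_eq_card_rows_iff _).mp (by rw [h2 η]; simp)
    have hy0 : y = 0 := h2' y (by rw [vecMul_fromCols, hyH, hb2]; ext (i|i) <;> rfl)
    rw [hz', hx0, hy0]; ext (i | i) <;> rfl
  · -- G - ηI is a unit, so y = 0
    have hunit : IsUnit (G - η • 1) := by
      rw [spectrum.mem_iff, not_not] at hspec
      have : (algebraMap ℂ (Matrix (Fin p) (Fin p) ℂ)) η - G = -(G - η • 1) := by
        rw [Algebra.algebraMap_eq_smul_one, neg_sub]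
      rw [this] at hspec
      simpa using hspec.neg
    have hy0 : y = 0 := by
      have hinj := vecMul_injective_iff_isUnit.mpr hunit
      have : y ᵥ* (G - η • 1) = (0 : Fin p → ℂ) ᵥ* (G - η • 1) := by
        rw [hb2, zero_vecMul]
      exact hinj this
    have hx0 : x = 0 := by
      have h1' := (rank_eq_card_rows_iff _).mp (by rw [h1 η hη]; simp)
      refine h1' x ?_
      rw [vecMul_fromCols]
      have hxa : x ᵥ* (A - η • 1) = 0 := by
        rw [hy0] at hb1; simpa using hb1
      have hxb : x ᵥ* B = 0 := by
        rw [hy0] at hr; simpa using hr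
      rw [hxa, hxb]; ext (i|i) <;> rfl
    rw [hz', hx0, hy0]; ext (i | i) <;> rfl
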